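/- Let I be a Grassmann necklace with decorated permutation π and positroid M. Suppose J ∈ M satisfies: for every alignment {i,j} of π, if i ∈ J then j ∈ J. Then J is weakly separated from every I_i, i.e., {I_1,...,I_n, J} is a weakly separated collection. -/

import Mathlib

def cpos {n : ℕ} (i a : Fin n) : ℕ := ((a - i : Fin n) : ℕ)

def CyclicallyOrdered {n : ℕ} (a b c d : Fin n) : Prop :=
  0 < cpos a b ∧ cpos a b < cpos a c ∧ cpos a c < cpos a d

instance {n : ℕ} (a b c d : Fin n) : Decidable (CyclicallyOrdered a b c d) := by
  unfold CyclicallyOrdered; infer_instance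

def WeaklySeparated {n : ℕ} (I J : Finset (Fin n)) : Prop :=
  ¬ ∃ a b a' b' : Fin n, CyclicallyOrdered a b a' b' ∧
    a ∈ I \ J ∧ a' ∈ I \ J ∧ b ∈ J \ I ∧ b' ∈ J \ I

def cycIco {n : ℕ} (i j : Fin n) : Finset (Fin n) :=
  Finset.univ.filter (fun x => cpos i x < cpos i j)

def cycIcc {n : ℕ} (i j : Fin n) : Finset (Fin n) :=
  Finset.univ.filter (fun x => cpos i x ≤ cpos i j)

def cycOpen {n : ℕ} (i j : Fin n) : Finset (Fin n) :=
  Finset.univ.filter (fun x => 0 < cpos i x ∧ cpos i x < cpos i j)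

def IsGrassmannNecklace {n : ℕ} [NeZero n] (k : ℕ) (I : Fin n → Finset (Fin n)) : Prop :=
  (∀ i, (I i).card = k) ∧ (∀ i, I i \ {i} ⊆ I (i + 1)) ∧ (∀ i, i ∉ I i → I (i + 1) = I i)

def leShift {n : ℕ} (i : Fin n) (A B : Finset (Fin n)) : Prop :=
  List.Forall₂ (· ≤ ·) ((A.image (fun x => x - i)).sort (· ≤ ·))
    ((B.image (fun x => x - i)).sort (· ≤ ·))

def MemPositroid {n : ℕ} (I : Fin n → Finset (Fin n)) (J : Finset (Fin n)) : Prop :=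
  ∀ i, leShift i (I i) J

def IsWSCollection {n : ℕ} (C : Finset (Finset (Fin n))) : Prop :=
  ∀ X ∈ C, ∀ Y ∈ C, WeaklySeparated X Y

def IsMaxWSCollection {n : ℕ} (k : ℕ) (C : Finset (Finset (Fin n))) : Prop :=
  (∀ X ∈ C, X.card = k) ∧ IsWSCollection C ∧
  ∀ C' : Finset (Finset (Fin n)), C ⊆ C' → (∀ X ∈ C', X.card = k) → IsWSCollection C' → C' = C

set_option linter.unusedSectionVars false

open Fin.NatCast

section helpers
variable {n : ℕ} [NeZero n]

lemma cpos_val (i a : Fin n) :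
    cpos i a = if i.val ≤ a.val then a.val - i.val else n + a.val - i.val := by
  have hi := i.isLt
  have ha := a.isLt
  unfold cpos
  rw [Fin.sub_def]
  simp only
  split_ifs with h
  · have he : (n - i.val) + a.val = n + (a.val - i.val) := by omega
    rw [he, Nat.add_mod_left, Nat.mod_eq_of_lt (by omega)]
  · rw [Nat.mod_eq_of_lt (by omega)]
    omega

lemma cpos_lt (i a : Fin n) : cpos i a < n := by
  have := i.isLt; have := a.isLt
  rw [cpos_val]; split_ifs <;> omega

lemma cpos_inj {i a b : Fin n} (h : cpos i a = cpos i b) : a = b := by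
  have := i.isLt; have := a.isLt; have := b.isLt
  rw [cpos_val, cpos_val] at h
  apply Fin.ext
  split_ifs at h <;> omega

lemma cpos_cast (i m : Fin n) : i + ((cpos i m : ℕ) : Fin n) = m := by
  unfold cpos
  rw [Fin.cast_val_eq_self, add_comm, sub_add_cancel]

lemma cpos_add (i : Fin n) {d : ℕ} (hd : d < n) : cpos i (i + (d : Fin n)) = d := by
  unfold cpos
  rw [add_sub_cancel_left, Fin.val_natCast, Nat.mod_eq_of_lt hd]

lemma cpos_succ (t : Fin n) : cpos (t + 1) t = n - 1 := by
  have ht := t.isLt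
  have h1 : (t + 1 : Fin n).val = (t.val + 1) % n := by
    rw [Fin.add_def]
    simp only [Fin.val_one']
    rw [Nat.add_comm t.val, Nat.mod_add_mod, Nat.add_comm]
  rw [cpos_val, h1]
  rcases Nat.lt_or_ge (t.val + 1) n with h2 | h2
  · rw [Nat.mod_eq_of_lt h2]; split_ifs <;> omega
  · have he : t.val + 1 = n := by omega
    rw [he, Nat.mod_self]; split_ifs <;> omega

lemma natCast_succ_fin (d : ℕ) : ((d + 1 : ℕ) : Fin n) = (d : Fin n) + 1 := by
  push_cast; ring

lemma memA (I : Fin n → Finset (Fin n)) (hstep : ∀ i, I i \ {i} ⊆ I (i + 1))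
    {t i : Fin n} (ht : t ∈ I i) :
    ∀ d : ℕ, d ≤ cpos i t → t ∈ I (i + (d : Fin n)) := by
  intro d
  induction d with
  | zero => intro _; simpa using ht
  | succ d ih =>
    intro hle
    have hdn : d < n := by have := cpos_lt i t; omega
    have h1 : t ∈ I (i + (d : Fin n)) := ih (by omega)
    have hne : (i + (d : Fin n)) ≠ t := by
      intro h
      have h2 := cpos_add i hdn
      rw [h] at h2; omega
    have h3 : t ∈ I (i + (d : Fin n)) \ {i + (d : Fin n)} :=
      Finset.mem_sdiff.mpr ⟨h1, by
        simp only [Finset.mem_singleton]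
        exact fun h => hne h.symm⟩
    have h4 := hstep (i + (d : Fin n)) h3
    rw [natCast_succ_fin, ← add_assoc]
    exact h4

lemma memB (I : Fin n → Finset (Fin n)) (π : Equiv.Perm (Fin n))
    (hsub : ∀ m, I (m + 1) ⊆ insert (π m) (I m))
    {t i : Fin n} (ht : t ∉ I i) :
    ∀ d : ℕ, d ≤ cpos i (π.symm t) → t ∉ I (i + (d : Fin n)) := by
  intro d
  induction d with
  | zero => intro _; simpa using ht
  | succ d ih =>
    intro hle
    have hdn : d < n := by have := cpos_lt i (π.symm t); omega
    have h1 := ih (by omega)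
    have hne : (i + (d : Fin n)) ≠ π.symm t := by
      intro h; have h2 := cpos_add i hdn; rw [h] at h2; omega
    have hπne : π (i + (d : Fin n)) ≠ t := by
      intro h; exact hne (by rw [← h, Equiv.symm_apply_apply])
    intro hmem
    rw [natCast_succ_fin, ← add_assoc] at hmem
    rcases Finset.mem_insert.mp (hsub _ hmem) with h | h
    · exact hπne h.symm
    · exact h1 h

lemma memC {i : Fin n} {A B : Finset (Fin n)} (hle : leShift i A B)
    (hiB : i ∈ B) : i ∈ A := by
  classical
  set A' := A.image (fun x => x - i) with hA'
  set B' := B.image (fun x => x - i) with hB'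
  have h0B : (0 : Fin n) ∈ B' := Finset.mem_image.mpr ⟨i, hiB, sub_self i⟩
  have hBne : B'.Nonempty := ⟨0, h0B⟩
  unfold leShift at hle
  rw [← hA', ← hB'] at hle
  rw [List.forall₂_iff_get] at hle
  obtain ⟨hlen, hget⟩ := hle
  have hlenB : 0 < (B'.sort (· ≤ ·)).length := by
    rw [Finset.length_sort]; exact Finset.card_pos.mpr hBne
  have hlenA : 0 < (A'.sort (· ≤ ·)).length := by rw [hlen]; exact hlenB
  have h1 := hget 0 hlenA hlenB
  have h2 : (B'.sort (· ≤ ·)).get ⟨0, hlenB⟩ = B'.min' hBne :=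
    Finset.sorted_zero_eq_min'_aux _ _ _
  have h3 : B'.min' hBne = 0 :=
    le_antisymm (Finset.min'_le _ _ h0B) (Fin.zero_le _)
  have h4 : (A'.sort (· ≤ ·)).get ⟨0, hlenA⟩ ∈ A' :=
    (Finset.mem_sort (· ≤ ·)).mp (List.get_mem _ _)
  have h5 : (A'.sort (· ≤ ·)).get ⟨0, hlenA⟩ = 0 := by
    refine le_antisymm ?_ (Fin.zero_le _)
    rw [h2, h3] at h1
    exact h1
  rw [h5] at h4
  obtain ⟨x, hx, hx0⟩ := Finset.mem_image.mp h4
  rwa [sub_eq_zero.mp hx0] at hx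

lemma memD {t : Fin n} {A B : Finset (Fin n)} (hle : leShift (t + 1) A B)
    (htA : t ∈ A) : t ∈ B := by
  classical
  have htop : ∀ x : Fin n, x ≤ t - (t + 1) := by
    intro x
    rw [Fin.le_def]
    have h := cpos_succ t
    unfold cpos at h
    rw [h]
    have := x.isLt; omega
  set A' := A.image (fun x => x - (t + 1)) with hA'
  set B' := B.image (fun x => x - (t + 1)) with hB'
  have hmA : (t - (t + 1)) ∈ A' := Finset.mem_image.mpr ⟨t, htA, rfl⟩
  have hAne : A'.Nonempty := ⟨_, hmA⟩
  unfold leShift at hle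
  rw [← hA', ← hB'] at hle
  rw [List.forall₂_iff_get] at hle
  obtain ⟨hlen, hget⟩ := hle
  have hlenA : 0 < (A'.sort (· ≤ ·)).length := by
    rw [Finset.length_sort]; exact Finset.card_pos.mpr hAne
  have hlenB : 0 < (B'.sort (· ≤ ·)).length := by rw [← hlen]; exact hlenA
  have hBne : B'.Nonempty := Finset.card_pos.mp (by rwa [Finset.length_sort] at hlenB)
  have hiA : (A'.sort (· ≤ ·)).length - 1 < (A'.sort (· ≤ ·)).length := by omega
  have hiB' : (A'.sort (· ≤ ·)).length - 1 < (B'.sort (· ≤ ·)).length := by omega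
  have h1 := hget ((A'.sort (· ≤ ·)).length - 1) hiA hiB'
  have h2 : (A'.sort (· ≤ ·)).get ⟨(A'.sort (· ≤ ·)).length - 1, hiA⟩ = A'.max' hAne :=
    Finset.sorted_last_eq_max'_aux _ hiA _
  have h3 : A'.max' hAne = t - (t + 1) :=
    le_antisymm (htop _) (Finset.le_max' _ _ hmA)
  have h4 : (B'.sort (· ≤ ·)).get ⟨(A'.sort (· ≤ ·)).length - 1, hiB'⟩ ∈ B' :=
    (Finset.mem_sort (· ≤ ·)).mp (List.get_mem _ _)
  have h5 : (B'.sort (· ≤ ·)).get ⟨(A'.sort (· ≤ ·)).length - 1, hiB'⟩ = t - (t + 1) := by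
    refine le_antisymm (htop _) ?_
    rw [h2, h3] at h1
    exact h1
  rw [h5] at h4
  obtain ⟨x, hx, hx0⟩ := Finset.mem_image.mp h4
  have : x = t := by
    have := sub_left_injective hx0
    exact this
  rwa [this] at hx

lemma find_xy {i a b a' b' : Fin n} (hcyc : CyclicallyOrdered a b a' b') :
    ∃ x y : Fin n, (x = a ∨ x = a') ∧ (y = b ∨ y = b') ∧ cpos i x < cpos i y := by
  by_contra hcon
  push_neg at hcon
  have h1 := hcon a b (Or.inl rfl) (Or.inl rfl)
  have h2 := hcon a b' (Or.inl rfl) (Or.inr rfl)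
  have h3 := hcon a' b (Or.inr rfl) (Or.inl rfl)
  have h4 := hcon a' b' (Or.inr rfl) (Or.inr rfl)
  obtain ⟨hc1, hc2, hc3⟩ := hcyc
  have := i.isLt; have := a.isLt; have := b.isLt; have := a'.isLt; have := b'.isLt
  simp only [cpos_val] at h1 h2 h3 h4 hc1 hc2 hc3
  split_ifs at h1 h2 h3 h4 hc1 hc2 hc3 <;> omega

lemma cyc_of {i w x y z : Fin n} (h1 : cpos i w < cpos i x) (h2 : cpos i x < cpos i y)
    (h3 : cpos i y < cpos i z) : CyclicallyOrdered w x y z := by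
  have := i.isLt; have := w.isLt; have := x.isLt; have := y.isLt; have := z.isLt
  unfold CyclicallyOrdered
  simp only [cpos_val] at h1 h2 h3 ⊢
  split_ifs at h1 h2 h3 ⊢ <;> omega

end helpers

section necklace
variable {n k : ℕ} [NeZero n] {I : Fin n → Finset (Fin n)} {π : Equiv.Perm (Fin n)}

lemma coloopAll (hI : IsGrassmannNecklace k I)
    (hπ : ∀ i : Fin n, (i ∈ I i → I (i + 1) = insert (π i) (I i \ {i})) ∧
      (i ∉ I i → π i = i))
    {t : Fin n} (ht : t ∈ I t) (hf : π t = t) : ∀ m, t ∈ I m := by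
  have h1 : t ∈ I (t + 1) := by
    rw [(hπ t).1 ht, hf]; exact Finset.mem_insert_self _ _
  intro m
  have h2 : cpos (t + 1) m ≤ cpos (t + 1) t := by
    rw [cpos_succ]; have := cpos_lt (t + 1) m; omega
  have h3 := memA I hI.2.1 h1 (cpos (t + 1) m) h2
  rwa [cpos_cast] at h3

lemma loopAll (hI : IsGrassmannNecklace k I)
    (hsub : ∀ m, I (m + 1) ⊆ insert (π m) (I m))
    {t : Fin n} (ht : t ∉ I t) (hf : π t = t) : ∀ m, t ∉ I m := by
  have h1 : t ∉ I (t + 1) := by rw [hI.2.2 t ht]; exact ht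
  intro m
  have hsym : π.symm t = t := (Equiv.symm_apply_eq π).mpr hf.symm
  have h2 : cpos (t + 1) m ≤ cpos (t + 1) (π.symm t) := by
    rw [hsym, cpos_succ]; have := cpos_lt (t + 1) m; omega
  have h3 := memB I π hsub h1 (cpos (t + 1) m) h2
  rwa [cpos_cast] at h3

lemma necklaceF1 (hI : IsGrassmannNecklace k I)
    (hπ : ∀ i : Fin n, (i ∈ I i → I (i + 1) = insert (π i) (I i \ {i})) ∧
      (i ∉ I i → π i = i))
    {t i : Fin n} (ht : t ∈ I i) (hf : π t ≠ t) :
    cpos i t < cpos i (π.symm t) := by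
  rcases Nat.lt_trichotomy (cpos i (π.symm t)) (cpos i t) with h | h | h
  · exfalso
    set p := π.symm t with hp
    have hπp : π p = t := Equiv.apply_symm_apply π t
    have hpt : p ≠ t := fun h' => hf (h' ▸ hπp)
    have h1 : t ∈ I (i + ((cpos i p : ℕ) : Fin n)) := memA I hI.2.1 ht _ (le_of_lt h)
    rw [cpos_cast] at h1
    have h2 : t ∈ I (i + ((cpos i p + 1 : ℕ) : Fin n)) := memA I hI.2.1 ht _ h
    rw [natCast_succ_fin, ← add_assoc, cpos_cast] at h2
    by_cases hpp : p ∈ I p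
    · have he := (hπ p).1 hpp
      rw [hπp] at he
      have hins : insert t (I p \ {p}) = I p \ {p} :=
        Finset.insert_eq_self.mpr (Finset.mem_sdiff.mpr ⟨h1, by
          simp only [Finset.mem_singleton]; exact Ne.symm hpt⟩)
      have hc1 : (I (p + 1)).card = (I p).card := by rw [hI.1, hI.1]
      rw [he, hins] at hc1
      have hsing : {p} ⊆ I p := Finset.singleton_subset_iff.mpr hpp
      rw [Finset.card_sdiff_of_subset hsing, Finset.card_singleton] at hc1
      have hpos : 0 < (I p).card := Finset.card_pos.mpr ⟨p, hpp⟩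
      omega
    · have hpe := (hπ p).2 hpp
      rw [hpe] at hπp
      exact hpt hπp
  · exfalso
    have hts := cpos_inj h
    exact hf ((congrArg π hts).symm.trans (Equiv.apply_symm_apply π t))
  · exact h

lemma necklaceF2 (hπ : ∀ i : Fin n, (i ∈ I i → I (i + 1) = insert (π i) (I i \ {i})) ∧
      (i ∉ I i → π i = i))
    (hsub : ∀ m, I (m + 1) ⊆ insert (π m) (I m))
    {t i : Fin n} (ht : t ∉ I i) (hf : π t ≠ t) :
    cpos i (π.symm t) < cpos i t := by
  rcases Nat.lt_trichotomy (cpos i t) (cpos i (π.symm t)) with h | h | h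
  · exfalso
    have h1 := memB I π hsub ht (cpos i t) (le_of_lt h)
    rw [cpos_cast] at h1
    exact hf ((hπ t).2 h1)
  · exfalso
    have hts := cpos_inj h
    exact hf ((congrArg π hts).trans (Equiv.apply_symm_apply π t))
  · exact h

end necklace


/-- If J ∈ M_I satisfies the alignment condition for the decorated permutation
π of the necklace (for strands i, j with π⁻¹(i), i, j, π⁻¹(j) cyclically
ordered, i ∈ J implies j ∈ J), then J is weakly separated from every I_i. -/
theorem stmt_16 {n k : ℕ} [NeZero n] (I : Fin n → Finset (Fin n))
    (hI : IsGrassmannNecklace k I) (π : Equiv.Perm (Fin n))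
    (hπ : ∀ i : Fin n, (i ∈ I i → I (i + 1) = insert (π i) (I i \ {i})) ∧
      (i ∉ I i → π i = i))
    (J : Finset (Fin n)) (hJk : J.card = k) (hJ : MemPositroid I J)
    (halign : ∀ i j : Fin n,
      CyclicallyOrdered (π.symm i) i j (π.symm j) → i ∈ J → j ∈ J) :
    ∀ i : Fin n, WeaklySeparated J (I i) := by
  have hsub : ∀ m, I (m + 1) ⊆ insert (π m) (I m) := by
    intro m
    by_cases hm : m ∈ I m
    · rw [(hπ m).1 hm]
      exact Finset.insert_subset_insert _ Finset.sdiff_subset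
    · rw [hI.2.2 m hm]
      exact Finset.subset_insert _ _
  intro i
  unfold WeaklySeparated
  rintro ⟨a, b, a', b', hcyc, ha, ha', hb, hb'⟩
  rw [Finset.mem_sdiff] at ha ha' hb hb'
  have nonfixJ : ∀ x : Fin n, x ∈ J → x ∉ I i → π x ≠ x := by
    intro x hxJ hxI hf
    by_cases hx : x ∈ I x
    · exact hxI (coloopAll hI hπ hx hf i)
    · exact hx (memC (hJ x) hxJ)
  have nonfixI : ∀ x : Fin n, x ∈ I i → x ∉ J → π x ≠ x := by
    intro x hxI hxJ hf
    by_cases hx : x ∈ I x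
    · exact hxJ (memD (hJ (x + 1)) (coloopAll hI hπ hx hf (x + 1)))
    · exact (loopAll hI hsub hx hf i) hxI
  have f2a : cpos i (π.symm a) < cpos i a := necklaceF2 hπ hsub ha.2 (nonfixJ a ha.1 ha.2)
  have f2a' : cpos i (π.symm a') < cpos i a' := necklaceF2 hπ hsub ha'.2 (nonfixJ a' ha'.1 ha'.2)
  have f1b : cpos i b < cpos i (π.symm b) := necklaceF1 hI hπ hb.1 (nonfixI b hb.1 hb.2)
  have f1b' : cpos i b' < cpos i (π.symm b') := necklaceF1 hI hπ hb'.1 (nonfixI b' hb'.1 hb'.2)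
  obtain ⟨x, y, hx, hy, hxy⟩ := find_xy (i := i) hcyc
  have hxJ : x ∈ J := by rcases hx with rfl | rfl; exacts [ha.1, ha'.1]
  have hyJ : y ∉ J := by rcases hy with rfl | rfl; exacts [hb.2, hb'.2]
  have hfx : cpos i (π.symm x) < cpos i x := by rcases hx with rfl | rfl; exacts [f2a, f2a']
  have hfy : cpos i y < cpos i (π.symm y) := by rcases hy with rfl | rfl; exacts [f1b, f1b']
  exact hyJ (halign x y (cyc_of hfx hxy hfy) hxJ)
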